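/- Under the distributed two-time-scale setup, define the residual V_k = ‖Ŷ_k‖ + (β_k/α_k)·‖X̂_k‖. Then for every k ≥ 0, V_{k+1} ≤ σ·V_k + 2β_k·(‖X̂_k‖ + ‖Ŷ_k‖) + 2√N·(R+C)·β_k. -/

import Mathlib

/-- The Euclidean norm of a vector (represented as a function into `ℝ`). -/
noncomputable def eucNorm {n : ℕ} (v : Fin n → ℝ) : ℝ :=
  Real.sqrt (∑ i, v i ^ 2)

/-- The Frobenius norm of an `N×d` real matrix. -/
noncomputable def fnorm {N d : ℕ} (M : Matrix (Fin N) (Fin d) ℝ) : ℝ :=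
  Real.sqrt (∑ i, ∑ j, M i j ^ 2)


lemma eucNorm_nonneg' {n : ℕ} (v : Fin n → ℝ) : 0 ≤ eucNorm v := Real.sqrt_nonneg _

lemma fnorm_nonneg' {N d : ℕ} (M : Matrix (Fin N) (Fin d) ℝ) : 0 ≤ fnorm M := Real.sqrt_nonneg _

lemma sq_eucNorm {n : ℕ} (v : Fin n → ℝ) : eucNorm v ^ 2 = ∑ i, v i ^ 2 :=
  Real.sq_sqrt (by positivity)

lemma fnorm_cols {N d : ℕ} (M : Matrix (Fin N) (Fin d) ℝ) :
    fnorm M = Real.sqrt (∑ j, ∑ i, M i j ^ 2) := by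
  unfold fnorm; rw [Finset.sum_comm]

lemma fnorm_eq_norm {N d : ℕ} (M : Matrix (Fin N) (Fin d) ℝ) :
    fnorm M = ‖(WithLp.equiv 2 (Fin N × Fin d → ℝ)).symm (fun p => M p.1 p.2)‖ := by
  rw [EuclideanSpace.norm_eq, fnorm]
  rw [Fintype.sum_prod_type]
  simp [Real.norm_eq_abs, sq_abs]

lemma fnorm_add_le' {N d : ℕ} (P Q : Matrix (Fin N) (Fin d) ℝ) :
    fnorm (Matrix.of fun i j => P i j + Q i j) ≤ fnorm P + fnorm Q := by
  rw [fnorm_eq_norm, fnorm_eq_norm P, fnorm_eq_norm Q]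
  have heq : (WithLp.equiv 2 (Fin N × Fin d → ℝ)).symm
        (fun p => (Matrix.of fun i j => P i j + Q i j) p.1 p.2)
      = (WithLp.equiv 2 (Fin N × Fin d → ℝ)).symm (fun p => P p.1 p.2)
        + (WithLp.equiv 2 (Fin N × Fin d → ℝ)).symm (fun p => Q p.1 p.2) := rfl
  rw [heq]
  exact norm_add_le _ _

lemma fnorm_add4_le {N d : ℕ} (P1 P2 P3 P4 : Matrix (Fin N) (Fin d) ℝ) :
    fnorm (Matrix.of fun i j => P1 i j + P2 i j + P3 i j + P4 i j)
      ≤ fnorm P1 + fnorm P2 + fnorm P3 + fnorm P4 := by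
  calc fnorm (Matrix.of fun i j => P1 i j + P2 i j + P3 i j + P4 i j)
      ≤ fnorm (Matrix.of fun i j => P1 i j + P2 i j + P3 i j) + fnorm P4 :=
        fnorm_add_le' (Matrix.of fun i j => P1 i j + P2 i j + P3 i j) P4
    _ ≤ (fnorm (Matrix.of fun i j => P1 i j + P2 i j) + fnorm P3) + fnorm P4 := by
        have := fnorm_add_le' (Matrix.of fun i j => P1 i j + P2 i j) P3
        simp only [Matrix.of_apply] at this ⊢
        linarith
    _ ≤ ((fnorm P1 + fnorm P2) + fnorm P3) + fnorm P4 := by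
        have := fnorm_add_le' P1 P2
        linarith
    _ = fnorm P1 + fnorm P2 + fnorm P3 + fnorm P4 := by ring

lemma fnorm_smul' {N d : ℕ} (c : ℝ) (P : Matrix (Fin N) (Fin d) ℝ) :
    fnorm (Matrix.of fun i j => c * P i j) = |c| * fnorm P := by
  unfold fnorm
  rw [← Real.sqrt_sq_eq_abs, ← Real.sqrt_mul (sq_nonneg c)]
  congr 1
  simp only [Matrix.of_apply, mul_pow, Finset.mul_sum]

lemma fnorm_rowmap_le {N d : ℕ} (A : Matrix (Fin d) (Fin d) ℝ)
    (hA : ∀ v, eucNorm (A.mulVec v) ≤ eucNorm v) (M : Matrix (Fin N) (Fin d) ℝ) :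
    fnorm (Matrix.of fun i j => A.mulVec (fun j' => M i j') j) ≤ fnorm M := by
  unfold fnorm
  apply Real.sqrt_le_sqrt
  apply Finset.sum_le_sum
  intro i _
  have h1 : ∑ j, (A.mulVec (fun j' => M i j')) j ^ 2 = eucNorm (A.mulVec (fun j' => M i j')) ^ 2 :=
    (sq_eucNorm _).symm
  have h2 : (∑ j, M i j ^ 2) = eucNorm (fun j' => M i j') ^ 2 := (sq_eucNorm _).symm
  simp only [Matrix.of_apply]
  rw [h1, h2]
  exact pow_le_pow_left₀ (eucNorm_nonneg' _) (hA _) 2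

lemma fnorm_colcontract {N d : ℕ} (W : Matrix (Fin N) (Fin N) ℝ) (σ : ℝ) (hσ : 0 ≤ σ)
    (hW : ∀ v : Fin N → ℝ, (∑ i, v i = 0) → eucNorm (W.mulVec v) ≤ σ * eucNorm v)
    (M : Matrix (Fin N) (Fin d) ℝ) (hM : ∀ j, ∑ i, M i j = 0) :
    fnorm (Matrix.of fun i j => W.mulVec (fun i' => M i' j) i) ≤ σ * fnorm M := by
  rw [fnorm_cols, fnorm_cols M]
  rw [← Real.sqrt_sq hσ, ← Real.sqrt_mul (sq_nonneg σ)]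
  apply Real.sqrt_le_sqrt
  rw [Finset.mul_sum]
  apply Finset.sum_le_sum
  intro j _
  have h1 : ∑ i, ((Matrix.of fun i j => W.mulVec (fun i' => M i' j) i) i j) ^ 2
      = eucNorm (W.mulVec (fun i' => M i' j)) ^ 2 := by
    rw [sq_eucNorm]
    rfl
  have h2 : ∑ i, M i j ^ 2 = eucNorm (fun i' => M i' j) ^ 2 := (sq_eucNorm _).symm
  rw [h1, h2, ← mul_pow]
  exact pow_le_pow_left₀ (eucNorm_nonneg' _) (hW _ (hM j)) 2

lemma fnorm_center_le {N d : ℕ} (M : Matrix (Fin N) (Fin d) ℝ) :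
    fnorm (Matrix.of fun i j => M i j - (1/(N:ℝ)) * ∑ l, M l j) ≤ fnorm M := by
  rw [fnorm_cols, fnorm_cols M]
  apply Real.sqrt_le_sqrt
  apply Finset.sum_le_sum
  intro j _
  simp only [Matrix.of_apply]
  set m : ℝ := (1/(N:ℝ)) * ∑ l, M l j with hm
  rcases Nat.eq_zero_or_pos N with hN | hN
  · subst hN; simp
  have hsum : ∑ i, M i j = (N:ℝ) * m := by
    rw [hm]
    field_simp
  have expand : ∑ i : Fin N, (M i j - m) ^ 2
      = (∑ i, M i j ^ 2) - 2 * m * (∑ i, M i j) + (N:ℝ) * m ^ 2 := by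
    have : ∀ i : Fin N, (M i j - m) ^ 2 = M i j ^ 2 - 2 * m * M i j + m ^ 2 := fun i => by ring
    rw [Finset.sum_congr rfl fun i _ => this i]
    rw [Finset.sum_add_distrib, Finset.sum_sub_distrib, Finset.sum_const, ← Finset.mul_sum]
    simp only [Finset.card_fin, nsmul_eq_mul]
    try ring
  rw [expand, hsum]
  have hN1 : (1:ℝ) ≤ (N:ℝ) := by exact_mod_cast hN
  nlinarith [sq_nonneg m]

lemma fnorm_le_sqrt_of_rows {N d : ℕ} (M : Matrix (Fin N) (Fin d) ℝ) {R : ℝ} (hR : 0 ≤ R)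
    (h : ∀ i, eucNorm (fun j => M i j) ≤ R) :
    fnorm M ≤ Real.sqrt N * R := by
  unfold fnorm
  rw [← Real.sqrt_sq hR, ← Real.sqrt_mul (Nat.cast_nonneg N)]
  apply Real.sqrt_le_sqrt
  calc ∑ i, ∑ j, M i j ^ 2 = ∑ i : Fin N, eucNorm (fun j => M i j) ^ 2 := by
        simp only [sq_eucNorm]
    _ ≤ ∑ i : Fin N, R ^ 2 := Finset.sum_le_sum fun i _ =>
        pow_le_pow_left₀ (eucNorm_nonneg' _) (h i) 2
    _ = (N:ℝ) * R ^ 2 := by simp [Finset.card_fin, nsmul_eq_mul]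

lemma fnorm_neg' {N d : ℕ} (P : Matrix (Fin N) (Fin d) ℝ) :
    fnorm (Matrix.of fun i j => -(P i j)) = fnorm P := by
  unfold fnorm
  simp [Matrix.of_apply, neg_sq]

lemma hat_rec {N d : ℕ} {W : Matrix (Fin N) (Fin N) ℝ}
    (hWrow : ∀ i, ∑ j, W i j = 1) (hWcol : ∀ j, ∑ i, W i j = 1)
    (a : ℝ) (u u1 G : Fin N → Fin d → ℝ)
    (hrec : ∀ i j, u1 i j = (∑ l, W i l * u l j) - a * G i j)
    (i : Fin N) (j : Fin d) :
    u1 i j - (1/(N:ℝ)) * ∑ l, u1 l j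
      = (∑ l, W i l * (u l j - (1/(N:ℝ)) * ∑ m, u m j))
        - a * (G i j - (1/(N:ℝ)) * ∑ l, G l j) := by
  have h1 : ∑ l, u1 l j = (∑ m, u m j) - a * ∑ l, G l j := by
    simp only [hrec]
    rw [Finset.sum_sub_distrib, ← Finset.mul_sum]
    congr 1
    rw [Finset.sum_comm]
    simp only [← Finset.sum_mul, hWcol, one_mul]
  have h2 : ∑ l, W i l * (u l j - (1/(N:ℝ)) * ∑ m, u m j)
      = (∑ l, W i l * u l j) - (1/(N:ℝ)) * ∑ m, u m j := by
    simp only [mul_sub]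
    rw [Finset.sum_sub_distrib, ← Finset.sum_mul, hWrow, one_mul]
  rw [hrec i j, h1, h2]
  ring

lemma mulVec_center {N d : ℕ} (A : Matrix (Fin d) (Fin d) ℝ) (v : Fin N → Fin d → ℝ)
    (i : Fin N) (j : Fin d) :
    A.mulVec (v i) j - (1/(N:ℝ)) * ∑ l, A.mulVec (v l) j
      = A.mulVec (fun m => v i m - (1/(N:ℝ)) * ∑ l, v l m) j := by
  simp only [Matrix.mulVec, dotProduct, mul_sub, Finset.sum_sub_distrib, Finset.mul_sum]
  congr 1
  rw [Finset.sum_comm]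
  exact Finset.sum_congr rfl fun m _ => Finset.sum_congr rfl fun l _ => by ring

lemma step_bound {N d : ℕ} (hN : 0 < N) {R C σ a : ℝ} (hR : 0 ≤ R) (hC : 0 ≤ C)
    (hσ : 0 ≤ σ) (ha : 0 ≤ a)
    (W : Matrix (Fin N) (Fin N) ℝ) (hWrow : ∀ i, ∑ j, W i j = 1) (hWcol : ∀ j, ∑ i, W i j = 1)
    (hWc : ∀ v : Fin N → ℝ, (∑ i, v i = 0) → eucNorm (W.mulVec v) ≤ σ * eucNorm v)
    (A B : Matrix (Fin d) (Fin d) ℝ)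
    (hA : ∀ v, eucNorm (A.mulVec v) ≤ eucNorm v) (hB : ∀ v, eucNorm (B.mulVec v) ≤ eucNorm v)
    (b ξ : Fin N → Fin d → ℝ) (hb : ∀ i, eucNorm (b i) ≤ R) (hξ : ∀ i, eucNorm (ξ i) ≤ C)
    (u v u1 : Fin N → Fin d → ℝ)
    (hrec : ∀ i, u1 i = (∑ l, W i l • u l) - a • (A.mulVec (u i) + B.mulVec (v i) - b i + ξ i))
    (Uh Vh U1h : Matrix (Fin N) (Fin d) ℝ)
    (hUh : ∀ i j, Uh i j = u i j - (1/(N:ℝ)) * ∑ l, u l j)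
    (hVh : ∀ i j, Vh i j = v i j - (1/(N:ℝ)) * ∑ l, v l j)
    (hU1h : ∀ i j, U1h i j = u1 i j - (1/(N:ℝ)) * ∑ l, u1 l j) :
    fnorm U1h ≤ σ * fnorm Uh + a * (fnorm Uh + fnorm Vh + Real.sqrt N * (R + C)) := by
  set G : Fin N → Fin d → ℝ :=
    fun i j => A.mulVec (u i) j + B.mulVec (v i) j - b i j + ξ i j with hG
  have hrec' : ∀ i j, u1 i j = (∑ l, W i l * u l j) - a * G i j := by
    intro i j
    rw [hrec i]
    simp [Finset.sum_apply, hG, Matrix.mulVec]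
    ring
  have hkey : ∀ i j, U1h i j =
      (∑ l, W i l * Uh l j) + (-a) * (G i j - (1/(N:ℝ)) * ∑ l, G l j) := by
    intro i j
    rw [hU1h, hat_rec hWrow hWcol a u u1 G hrec' i j]
    simp only [hUh]
    ring
  have hU1eq : U1h = Matrix.of fun i j =>
      (Matrix.of fun i j => ∑ l, W i l * Uh l j) i j
        + (Matrix.of fun i j => (-a) * (G i j - (1/(N:ℝ)) * ∑ l, G l j)) i j := by
    ext i j
    simpa [Matrix.of_apply] using hkey i j
  -- consensus part
  have hcolsum : ∀ j, ∑ i, Uh i j = 0 := by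
    intro j
    simp only [hUh]
    rw [Finset.sum_sub_distrib, Finset.sum_const, Finset.card_fin, nsmul_eq_mul]
    have hNne : (N:ℝ) ≠ 0 := Nat.cast_ne_zero.2 hN.ne'
    field_simp
    ring
  have hform : (Matrix.of fun i j => ∑ l, W i l * Uh l j)
      = Matrix.of fun i j => W.mulVec (fun i' => Uh i' j) i := by
    ext i j
    simp [Matrix.mulVec, dotProduct]
  have hWU : fnorm (Matrix.of fun i j => ∑ l, W i l * Uh l j) ≤ σ * fnorm Uh := by
    rw [hform]
    exact fnorm_colcontract W σ hσ hWc Uh hcolsum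
  -- gradient part
  have hGdec : ∀ i j, G i j - (1/(N:ℝ)) * ∑ l, G l j
      = A.mulVec (fun m => Uh i m) j + B.mulVec (fun m => Vh i m) j
        + (-(b i j - (1/(N:ℝ)) * ∑ l, b l j)) + (ξ i j - (1/(N:ℝ)) * ∑ l, ξ l j) := by
    intro i j
    have e1 : A.mulVec (fun m => Uh i m) j
        = A.mulVec (u i) j - (1/(N:ℝ)) * ∑ l, A.mulVec (u l) j := by
      have h : (fun m => Uh i m) = (fun m => u i m - (1/(N:ℝ)) * ∑ l, u l m) :=
        funext fun m => hUh i m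
      rw [h, ← mulVec_center A u i j]
    have e2 : B.mulVec (fun m => Vh i m) j
        = B.mulVec (v i) j - (1/(N:ℝ)) * ∑ l, B.mulVec (v l) j := by
      have h : (fun m => Vh i m) = (fun m => v i m - (1/(N:ℝ)) * ∑ l, v l m) :=
        funext fun m => hVh i m
      rw [h, ← mulVec_center B v i j]
    rw [e1, e2]
    have hsplit : ∑ l, G l j = (∑ l, A.mulVec (u l) j) + (∑ l, B.mulVec (v l) j)
        - (∑ l, b l j) + (∑ l, ξ l j) := by
      simp only [hG, Finset.sum_add_distrib, Finset.sum_sub_distrib]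
    rw [hsplit]
    simp only [hG]
    ring
  have hP1 : fnorm (Matrix.of fun i j => A.mulVec (fun m => Uh i m) j) ≤ fnorm Uh :=
    fnorm_rowmap_le A hA Uh
  have hP2 : fnorm (Matrix.of fun i j => B.mulVec (fun m => Vh i m) j) ≤ fnorm Vh :=
    fnorm_rowmap_le B hB Vh
  have hP3 : fnorm (Matrix.of fun i j => -(b i j - (1/(N:ℝ)) * ∑ l, b l j))
      ≤ Real.sqrt N * R := by
    have h1 := fnorm_neg' (Matrix.of fun i j => b i j - (1/(N:ℝ)) * ∑ l, b l j)
    simp only [Matrix.of_apply] at h1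
    rw [h1]
    have h2 := fnorm_center_le (Matrix.of fun i j => b i j)
    simp only [Matrix.of_apply] at h2
    refine h2.trans ?_
    exact fnorm_le_sqrt_of_rows _ hR (fun i => hb i)
  have hP4 : fnorm (Matrix.of fun i j => ξ i j - (1/(N:ℝ)) * ∑ l, ξ l j)
      ≤ Real.sqrt N * C := by
    have h2 := fnorm_center_le (Matrix.of fun i j => ξ i j)
    simp only [Matrix.of_apply] at h2
    refine h2.trans ?_
    exact fnorm_le_sqrt_of_rows _ hC (fun i => hξ i)
  have hGhat : fnorm (Matrix.of fun i j => G i j - (1/(N:ℝ)) * ∑ l, G l j)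
      ≤ fnorm Uh + fnorm Vh + Real.sqrt N * (R + C) := by
    have hdec : (Matrix.of fun i j => G i j - (1/(N:ℝ)) * ∑ l, G l j)
        = Matrix.of fun i j =>
            (Matrix.of fun i j => A.mulVec (fun m => Uh i m) j) i j
            + (Matrix.of fun i j => B.mulVec (fun m => Vh i m) j) i j
            + (Matrix.of fun i j => -(b i j - (1/(N:ℝ)) * ∑ l, b l j)) i j
            + (Matrix.of fun i j => ξ i j - (1/(N:ℝ)) * ∑ l, ξ l j) i j := by
      ext i j
      simpa [Matrix.of_apply] using hGdec i j
    rw [hdec]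
    have h4 := fnorm_add4_le
      (Matrix.of fun i j => A.mulVec (fun m => Uh i m) j)
      (Matrix.of fun i j => B.mulVec (fun m => Vh i m) j)
      (Matrix.of fun i j => -(b i j - (1/(N:ℝ)) * ∑ l, b l j))
      (Matrix.of fun i j => ξ i j - (1/(N:ℝ)) * ∑ l, ξ l j)
    refine h4.trans ?_
    have : Real.sqrt N * (R + C) = Real.sqrt N * R + Real.sqrt N * C := by ring
    linarith
  -- assemble
  have hsmul : fnorm (Matrix.of fun i j => (-a) * (G i j - (1/(N:ℝ)) * ∑ l, G l j))
      = a * fnorm (Matrix.of fun i j => G i j - (1/(N:ℝ)) * ∑ l, G l j) := by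
    have h := fnorm_smul' (-a) (Matrix.of fun i j => G i j - (1/(N:ℝ)) * ∑ l, G l j)
    simp only [Matrix.of_apply] at h
    rw [h, abs_neg, abs_of_nonneg ha]
  calc fnorm U1h
      ≤ fnorm (Matrix.of fun i j => ∑ l, W i l * Uh l j)
        + fnorm (Matrix.of fun i j => (-a) * (G i j - (1/(N:ℝ)) * ∑ l, G l j)) := by
        rw [hU1eq]
        exact fnorm_add_le' _ _
    _ ≤ σ * fnorm Uh + a * (fnorm Uh + fnorm Vh + Real.sqrt N * (R + C)) := by
        rw [hsmul]
        have := mul_le_mul_of_nonneg_left hGhat ha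
        linarith

lemma ratio_key (t : ℝ) (ht : 0 < t) :
    t * (t + 1) ^ ((2:ℝ)/3) ≤ (t + 1) * t ^ ((2:ℝ)/3) := by
  have ht1 : (0:ℝ) < t + 1 := by linarith
  have ht23 : (0:ℝ) < t ^ ((2:ℝ)/3) := Real.rpow_pos_of_pos ht _
  have hs23 : (0:ℝ) < (t + 1) ^ ((2:ℝ)/3) := Real.rpow_pos_of_pos ht1 _
  have h13 : t ^ ((1:ℝ)/3) ≤ (t + 1) ^ ((1:ℝ)/3) :=
    Real.rpow_le_rpow ht.le (by linarith) (by norm_num)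
  have e1 : t = t ^ ((1:ℝ)/3) * t ^ ((2:ℝ)/3) := by
    rw [← Real.rpow_add ht]; norm_num
  have e2 : t + 1 = (t + 1) ^ ((1:ℝ)/3) * (t + 1) ^ ((2:ℝ)/3) := by
    rw [← Real.rpow_add ht1]; norm_num
  calc t * (t + 1) ^ ((2:ℝ)/3)
      = t ^ ((1:ℝ)/3) * t ^ ((2:ℝ)/3) * (t + 1) ^ ((2:ℝ)/3) := by rw [← e1]
    _ ≤ (t + 1) ^ ((1:ℝ)/3) * t ^ ((2:ℝ)/3) * (t + 1) ^ ((2:ℝ)/3) :=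
        mul_le_mul_of_nonneg_right (mul_le_mul_of_nonneg_right h13 ht23.le) hs23.le
    _ = ((t + 1) ^ ((1:ℝ)/3) * (t + 1) ^ ((2:ℝ)/3)) * t ^ ((2:ℝ)/3) := by ring
    _ = (t + 1) * t ^ ((2:ℝ)/3) := by rw [← e2]
/-- Under the distributed two-time-scale setup, with the residual
`V_k = ‖Ŷ_k‖ + (β_k/α_k)‖X̂_k‖`, for every `k ≥ 0`,
`V_{k+1} ≤ σ·V_k + 2β_k(‖X̂_k‖ + ‖Ŷ_k‖) + 2√N(R+C)β_k`. -/
theorem stmt_10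
    {N d : ℕ} (hN : 0 < N) (hd : 0 < d) (R C : ℝ) (hR : 0 ≤ R) (hC : 0 ≤ C)
    (W V : Matrix (Fin N) (Fin N) ℝ)
    (hWnonneg : ∀ i j, 0 ≤ W i j) (hWrow : ∀ i, ∑ j, W i j = 1)
    (hWcol : ∀ j, ∑ i, W i j = 1)
    (hVnonneg : ∀ i j, 0 ≤ V i j) (hVrow : ∀ i, ∑ j, V i j = 1)
    (hVcol : ∀ j, ∑ i, V i j = 1)
    (σ : ℝ) (hσ0 : 0 < σ) (hσ1 : σ < 1)
    (hWcontract : ∀ v : Fin N → ℝ, (∑ i, v i = 0) → eucNorm (W.mulVec v) ≤ σ * eucNorm v)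
    (hVcontract : ∀ v : Fin N → ℝ, (∑ i, v i = 0) → eucNorm (V.mulVec v) ≤ σ * eucNorm v)
    (A11 A12 A21 A22 : Matrix (Fin d) (Fin d) ℝ)
    (hA11 : ∀ v, eucNorm (A11.mulVec v) ≤ eucNorm v)
    (hA12 : ∀ v, eucNorm (A12.mulVec v) ≤ eucNorm v)
    (hA21 : ∀ v, eucNorm (A21.mulVec v) ≤ eucNorm v)
    (hA22 : ∀ v, eucNorm (A22.mulVec v) ≤ eucNorm v)
    (b1 b2 : Fin N → Fin d → ℝ)
    (hb1 : ∀ i, eucNorm (b1 i) ≤ R) (hb2 : ∀ i, eucNorm (b2 i) ≤ R)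
    (ξ ψ : ℕ → Fin N → Fin d → ℝ)
    (hξ : ∀ k i, eucNorm (ξ k i) ≤ C) (hψ : ∀ k i, eucNorm (ψ k i) ≤ C)
    (α0 β0 : ℝ) (hβ0 : 0 < β0) (hβα : β0 ≤ α0)
    (α β : ℕ → ℝ)
    (hα : ∀ k, α k = α0 / ((k : ℝ) + 1) ^ ((2 : ℝ) / 3))
    (hβ : ∀ k, β k = β0 / ((k : ℝ) + 1))
    (x y : ℕ → Fin N → Fin d → ℝ)
    (hx0 : ∀ i, x 0 i = 0) (hy0 : ∀ i, y 0 i = 0)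
    (hxrec : ∀ k i, x (k + 1) i =
      (∑ j, W i j • x k j) -
        α k • (A11.mulVec (x k i) + A12.mulVec (y k i) - b1 i + ξ k i))
    (hyrec : ∀ k i, y (k + 1) i =
      (∑ j, V i j • y k j) -
        β k • (A21.mulVec (x k i) + A22.mulVec (y k i) - b2 i + ψ k i))
    (xbar ybar : ℕ → Fin d → ℝ)
    (hxbar : ∀ k, xbar k = (1 / (N : ℝ)) • ∑ i, x k i)
    (hybar : ∀ k, ybar k = (1 / (N : ℝ)) • ∑ i, y k i)
    (Xhat Yhat : ℕ → Matrix (Fin N) (Fin d) ℝ)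
    (hXhat : ∀ k, Xhat k = Matrix.of fun i j => x k i j - xbar k j)
    (hYhat : ∀ k, Yhat k = Matrix.of fun i j => y k i j - ybar k j)
    (Vres : ℕ → ℝ)
    (hVres : ∀ k, Vres k = fnorm (Yhat k) + (β k / α k) * fnorm (Xhat k))
    (k : ℕ) :
    Vres (k + 1) ≤ σ * Vres k + 2 * β k * (fnorm (Xhat k) + fnorm (Yhat k))
      + 2 * Real.sqrt N * (R + C) * β k := by
  have hα0 : 0 < α0 := lt_of_lt_of_le hβ0 hβα
  have hαpos : ∀ m : ℕ, 0 < α m := fun m => by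
    rw [hα m]
    have : (0:ℝ) < ((m:ℝ) + 1) ^ ((2:ℝ)/3) := Real.rpow_pos_of_pos (by positivity) _
    positivity
  have hβpos : ∀ m : ℕ, 0 < β m := fun m => by
    rw [hβ m]; positivity
  have hXh : ∀ m i j, Xhat m i j = x m i j - (1/(N:ℝ)) * ∑ l, x m l j := by
    intro m i j
    rw [hXhat m]
    simp [hxbar m, Finset.sum_apply]
  have hYh : ∀ m i j, Yhat m i j = y m i j - (1/(N:ℝ)) * ∑ l, y m l j := by
    intro m i j
    rw [hYhat m]
    simp [hybar m, Finset.sum_apply]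
  have hXfin := step_bound hN hR hC hσ0.le (hαpos k).le W hWrow hWcol hWcontract
    A11 A12 hA11 hA12 b1 (ξ k) hb1 (hξ k) (x k) (y k) (x (k+1)) (hxrec k)
    (Xhat k) (Yhat k) (Xhat (k+1)) (hXh k) (hYh k) (hXh (k+1))
  have hyrec' : ∀ i, y (k + 1) i =
      (∑ l, V i l • y k l) -
        β k • (A22.mulVec (y k i) + A21.mulVec (x k i) - b2 i + ψ k i) := fun i => by
    rw [hyrec k i, add_comm (A21.mulVec (x k i)) (A22.mulVec (y k i))]
  have hYfin := step_bound hN hR hC hσ0.le (hβpos k).le V hVrow hVcol hVcontract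
    A22 A21 hA22 hA21 b2 (ψ k) hb2 (hψ k) (y k) (x k) (y (k+1)) hyrec'
    (Yhat k) (Xhat k) (Yhat (k+1)) (hYh k) (hXh k) (hYh (k+1))
  -- step-size ratio is nonincreasing
  have hcross : β (k+1) * α k ≤ β k * α (k+1) := by
    rw [hβ (k+1), hβ k, hα k, hα (k+1)]
    push_cast
    rw [div_mul_div_comm, div_mul_div_comm]
    have key := ratio_key ((k:ℝ) + 1) (by positivity)
    have h1 : (0:ℝ) < ((k:ℝ) + 1) ^ ((2:ℝ)/3) := Real.rpow_pos_of_pos (by positivity) _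
    gcongr
  have hrmono : β (k+1) / α (k+1) ≤ β k / α k := by
    rw [div_le_div_iff₀ (hαpos (k+1)) (hαpos k)]
    exact hcross
  have hrpos : 0 ≤ β k / α k := (div_pos (hβpos k) (hαpos k)).le
  have hrα : (β k / α k) * α k = β k := div_mul_cancel₀ _ (hαpos k).ne'
  rw [hVres (k+1), hVres k]
  have h1 : (β (k+1) / α (k+1)) * fnorm (Xhat (k+1)) ≤ (β k / α k) * fnorm (Xhat (k+1)) :=
    mul_le_mul_of_nonneg_right hrmono (fnorm_nonneg' _)
  have h2 : (β k / α k) * fnorm (Xhat (k+1))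
      ≤ (β k / α k) * (σ * fnorm (Xhat k)
          + α k * (fnorm (Xhat k) + fnorm (Yhat k) + Real.sqrt N * (R + C))) :=
    mul_le_mul_of_nonneg_left hXfin hrpos
  have h3 : (β k / α k) * (σ * fnorm (Xhat k)
        + α k * (fnorm (Xhat k) + fnorm (Yhat k) + Real.sqrt N * (R + C)))
      = σ * ((β k / α k) * fnorm (Xhat k))
        + β k * (fnorm (Xhat k) + fnorm (Yhat k) + Real.sqrt N * (R + C)) := by
    have hane : α k ≠ 0 := (hαpos k).ne'
    field_simp
  linarith [hYfin]
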